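/- Let 0 < a < b, c > 0 and μ ≥ 0. Then the improper integral R_μ(a,b;c) = ∫_c^∞ x I_μ(ax) K_μ(bx) dx converges and equals (ac I_{μ+1}(ac) K_μ(bc) + bc I_μ(ac) K_{μ+1}(bc)) / (b² − a²). -/

import Mathlib

open MeasureTheory ProbabilityTheory Real Filter Set
open scoped ENNReal NNReal Topology

/-- Modified Bessel function of the first kind `I_μ(x)`, defined by its series. -/
noncomputable def besselI (μ x : ℝ) : ℝ :=
  ∑' k : ℕ, (x / 2) ^ (2 * (k : ℝ) + μ) / ((k.factorial : ℝ) * Real.Gamma ((k : ℝ) + μ + 1))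

/-- Macdonald function (modified Bessel function of the second kind) `K_μ(x)`. -/
noncomputable def besselK (μ x : ℝ) : ℝ :=
  ∫ t in Set.Ioi (0 : ℝ), Real.exp (-(x * Real.cosh t)) * Real.cosh (μ * t)

/-- `S_m = 2 π^{(m+1)/2} / Γ((m+1)/2)`, the surface area of the `m`-dimensional unit sphere. -/
noncomputable def sphereArea (m : ℕ) : ℝ :=
  2 * Real.pi ^ (((m : ℝ) + 1) / 2) / Real.Gamma (((m : ℝ) + 1) / 2)

/-- The coefficient `ξ_{μ,n}(y)`. -/
noncomputable def xiCoef (μ : ℝ) (n : ℕ) (y : ℝ) : ℝ :=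
  if μ = 0 ∧ n = 0 then besselI 0 y ^ 2 / 2
  else (-1 : ℝ) ^ n * (μ + n) * Real.Gamma (2 * μ + n) * besselI (μ + n) y ^ 2
    / (n.factorial : ℝ)

/-- The coefficient `ζ_{μ,n}(y)`. -/
noncomputable def zetaCoef (μ : ℝ) (n : ℕ) (y : ℝ) : ℝ :=
  if μ = 0 ∧ n = 0 then besselI 0 y * besselI 1 y / 2
  else (-1 : ℝ) ^ n * (μ + n) * Real.Gamma (2 * μ + n) * besselI (μ + n) y
    * besselI (μ + n + 1) y / (n.factorial : ℝ)

/-- A standard `d`-dimensional Brownian motion on a probability space `(Ω, P)`. -/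
structure IsBrownianMotion {Ω : Type*} [MeasurableSpace Ω] (P : Measure Ω) (d : ℕ)
    (B : ℝ → Ω → EuclideanSpace ℝ (Fin d)) : Prop where
  isProb : IsProbabilityMeasure P
  meas : ∀ t : ℝ, Measurable (B t)
  cont : ∀ᵐ ω ∂P, Continuous fun t : ℝ => B t ω
  init : ∀ᵐ ω ∂P, B 0 ω = 0
  indep_incr : ∀ (n : ℕ) (t : Fin (n + 1) → ℝ), Monotone t → (∀ i, 0 ≤ t i) →
    iIndepFun
      (fun i : Fin n => fun ω => B (t i.succ) ω - B (t i.castSucc) ω) P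
  gauss_coord : ∀ s t : ℝ, 0 ≤ s → s ≤ t → ∀ i : Fin d,
    Measure.map (fun ω => (B t ω - B s ω) i) P = gaussianReal 0 (Real.toNNReal (t - s))
  indep_coord : ∀ s t : ℝ, 0 ≤ s → s ≤ t →
    iIndepFun
      (fun (i : Fin d) (ω : Ω) => (B t ω - B s ω) i) P

/-- Hitting time of the closed ball of radius `r` by the drifted process `B(s)+sv` started
shifted by `x`. -/
noncomputable def hitTime {Ω : Type*} {d : ℕ} (B : ℝ → Ω → EuclideanSpace ℝ (Fin d))
    (v x : EuclideanSpace ℝ (Fin d)) (r : ℝ) (ω : Ω) : ℝ :=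
  sInf {s : ℝ | 0 ≤ s ∧ ‖B s ω + s • v + x‖ ≤ r}

/-- `L_v^d(t) = ∫_{ℝ^d ∖ D} P(τ_v(x) ≤ t) dx`. -/
noncomputable def sausageL {Ω : Type*} [MeasurableSpace Ω] (P : Measure Ω) {d : ℕ}
    (B : ℝ → Ω → EuclideanSpace ℝ (Fin d)) (v : EuclideanSpace ℝ (Fin d)) (r t : ℝ) : ℝ :=
  ∫ x in (Metric.closedBall (0 : EuclideanSpace ℝ (Fin d)) r)ᶜ,
    (P {ω | hitTime B v x r ω ≤ t}).toReal

/-- `Σ_v^m(t) = e^{-|v|² t / 2} L_0^m(t)`, where `L0` stands for `L_0^m`. -/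
noncomputable def sigmaV (vnorm : ℝ) (L0 : ℝ → ℝ) (t : ℝ) : ℝ :=
  Real.exp (-(vnorm ^ 2 * t / 2)) * L0 t

/-- `Σ̃_v^m(t)`. -/
noncomputable def sigmaTilde (vnorm : ℝ) (L0 : ℝ → ℝ) (t : ℝ) : ℝ :=
  sigmaV vnorm L0 t + vnorm ^ 2 * ∫ s in (0:ℝ)..t, sigmaV vnorm L0 s
    + vnorm ^ 4 / 4 * ∫ s in (0:ℝ)..t, (t - s) * sigmaV vnorm L0 s

/-- The function `F_μ(λ)` (depending on `|v|` and `r`). -/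
noncomputable def Fmu (vnorm r μ lam : ℝ) : ℝ :=
  Real.sqrt (2 * lam + vnorm ^ 2) / lam ^ 2
    * besselK (μ + 1) (r * Real.sqrt (2 * lam + vnorm ^ 2))
    / besselK μ (r * Real.sqrt (2 * lam + vnorm ^ 2))

/-- The Gegenbauer polynomial `C_n^μ(x)` for `μ > 0`. -/
noncomputable def gegenbauerC (μ : ℝ) (n : ℕ) (x : ℝ) : ℝ :=
  (1 / Real.Gamma μ) * ∑ m ∈ Finset.range (n / 2 + 1),
    (-1 : ℝ) ^ m * Real.Gamma (μ + n - m) / ((m.factorial : ℝ) * ((n - 2 * m).factorial : ℝ))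
      * (2 * x) ^ (n - 2 * m)

/-- The constant `N_v^d` (as a function of `|v|`), the linear growth rate of the expected
volume of the Wiener sausage with drift. -/
noncomputable def NvD (d : ℕ) (r y : ℝ) : ℝ :=
  if d = 2 then
    Real.pi * besselI 0 (r * y) / besselK 0 (r * y)
      + 2 * Real.pi * ∑' n : ℕ,
        (-1 : ℝ) ^ (n + 1) * besselI ((n : ℝ) + 1) (r * y) / besselK ((n : ℝ) + 1) (r * y)
  else
    Real.pi * sphereArea (d - 2) / y ^ ((d : ℝ) - 2) * ∑' n : ℕ,
      (-1 : ℝ) ^ n * (((d : ℝ) / 2 - 1) + n) * Real.Gamma (2 * ((d : ℝ) / 2 - 1) + n)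
        / (n.factorial : ℝ)
        * besselI (((d : ℝ) / 2 - 1) + n) (r * y) / besselK (((d : ℝ) / 2 - 1) + n) (r * y)

lemma bessel_cosh_lb (t : ℝ) : 1 + t^2/2 ≤ Real.cosh t := by
  have h2 : Real.cosh t = 2 * Real.sinh (t/2)^2 + 1 := by
    have h := Real.cosh_two_mul (t/2)
    have h2 : 2*(t/2) = t := by ring
    rw [h2] at h
    rw [h, Real.cosh_sq]; ring
  have h3 : (t/2)^2 ≤ Real.sinh (t/2)^2 := by
    have := Real.abs_sinh (t/2)
    have h4 : |t/2| ≤ Real.sinh |t/2| := by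
      rcases eq_or_lt_of_le (abs_nonneg (t/2)) with h|h
      · simp [← h]
      · exact (Real.self_lt_sinh_iff.2 h).le
    calc (t/2)^2 = |t/2|^2 := (sq_abs _).symm
    _ ≤ Real.sinh |t/2|^2 := by
        apply pow_le_pow_left₀ (abs_nonneg _) h4
    _ = Real.sinh (t/2)^2 := by rw [← this, sq_abs]
  nlinarith [h3]

lemma bessel_cosh_le (u : ℝ) : Real.cosh u ≤ Real.exp |u| := by
  rw [Real.cosh_eq]
  have h1 : Real.exp u ≤ Real.exp |u| := Real.exp_le_exp.2 (le_abs_self u)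
  have h2 : Real.exp (-u) ≤ Real.exp |u| := Real.exp_le_exp.2 (neg_le_abs u)
  linarith

lemma bessel_int_gauss (p : ℝ) {b : ℝ} (hb : 0 < b) :
    Integrable (fun t : ℝ => Real.exp (p*t - b*t^2)) := by
  apply Integrable.mono' ((integrable_exp_neg_mul_sq (show (0:ℝ) < b/2 by linarith)).const_mul
    (Real.exp (p^2/(2*b))))
  · exact (Real.continuous_exp.comp (by continuity)).aestronglyMeasurable
  · refine ae_of_all _ fun t => ?_
    rw [Real.norm_eq_abs, abs_of_nonneg (Real.exp_nonneg _), ← Real.exp_add]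
    apply Real.exp_le_exp.2
    have h' : p*t ≤ b/2*t^2 + p^2/(2*b) := by
      rw [← sub_nonneg]
      have heq : b/2*t^2 + p^2/(2*b) - p*t = (b*t - p)^2/(2*b) := by
        field_simp; ring
      rw [heq]; positivity
    nlinarith

lemma bessel_int_master {x : ℝ} (p : ℝ) (hx : 0 < x) :
    IntegrableOn (fun t => Real.exp (p*t - x*Real.cosh t)) (Ioi 0) := by
  apply Integrable.mono' (((bessel_int_gauss p (show (0:ℝ) < x/2 by linarith)).const_mul
    (Real.exp (-x))).integrableOn (s := Ioi 0))
  · exact (Real.continuous_exp.comp (by continuity)).aestronglyMeasurable.restrict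
  · refine ae_of_all _ fun t => ?_
    rw [Real.norm_eq_abs, abs_of_nonneg (Real.exp_nonneg _), ← Real.exp_add]
    apply Real.exp_le_exp.2
    have := bessel_cosh_lb t
    nlinarith

lemma bessel_int_dom {f : ℝ → ℝ} (hf : Continuous f) {x : ℝ} (p C : ℝ) (hx : 0 < x)
    (h : ∀ t, 0 < t → |f t| ≤ C * Real.exp (p*t - x*Real.cosh t)) :
    IntegrableOn f (Ioi 0) := by
  apply Integrable.mono' ((bessel_int_master p hx).const_mul C)
  · exact hf.aestronglyMeasurable.restrict
  · filter_upwards [ae_restrict_mem measurableSet_Ioi] with t ht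
    exact h t ht

lemma besselK_kernel_int {x ν : ℝ} (hx : 0 < x) :
    IntegrableOn (fun t => Real.exp (-(x*Real.cosh t)) * Real.cosh (ν*t)) (Ioi 0) := by
  apply bessel_int_dom (by continuity) (|ν|) 1 hx
  intro t ht
  rw [abs_mul, abs_of_nonneg (Real.exp_nonneg _), abs_of_pos (Real.cosh_pos _), one_mul]
  have h1 : Real.cosh (ν*t) ≤ Real.exp (|ν| * t) := by
    calc Real.cosh (ν*t) ≤ Real.exp |ν*t| := bessel_cosh_le _
    _ = Real.exp (|ν| * t) := by rw [abs_mul, abs_of_pos ht]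
  calc Real.exp (-(x*Real.cosh t)) * Real.cosh (ν*t)
      ≤ Real.exp (-(x*Real.cosh t)) * Real.exp (|ν| * t) := by
        exact mul_le_mul_of_nonneg_left h1 (Real.exp_nonneg _)
  _ = Real.exp (|ν| * t - x*Real.cosh t) := by rw [← Real.exp_add]; ring_nf

lemma besselK_nonneg (ν x : ℝ) : 0 ≤ besselK ν x :=
  integral_nonneg fun t => mul_nonneg (Real.exp_nonneg _) (Real.cosh_pos _).le

lemma hasDerivAt_besselK (ν : ℝ) {x : ℝ} (hx : 0 < x) :
    HasDerivAt (besselK ν) (-((besselK (ν+1) x + besselK (ν-1) x)/2)) x := by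
  have key := hasDerivAt_integral_of_dominated_loc_of_deriv_le (μ := volume.restrict (Ioi 0))
    (F := fun y t => Real.exp (-(y*Real.cosh t)) * Real.cosh (ν*t))
    (F' := fun y t => -(Real.cosh t * (Real.exp (-(y*Real.cosh t)) * Real.cosh (ν*t))))
    (x₀ := x) (s := Metric.ball x (x/2))
    (bound := fun t => Real.cosh t * (Real.exp (-((x/2)*Real.cosh t)) * Real.cosh (ν*t)))
    (Metric.ball_mem_nhds x (by linarith)) (Eventually.of_forall fun y =>
      ((Real.continuous_exp.comp (by continuity)).mul (by continuity)).aestronglyMeasurable.restrict)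
    (besselK_kernel_int hx)
    ((((Real.continuous_cosh).mul ((Real.continuous_exp.comp (by continuity)).mul
      (by continuity))).neg).aestronglyMeasurable.restrict)
    ?_ ?_ ?_
  · have h2 : HasDerivAt (besselK ν)
        (∫ t in Ioi (0:ℝ), -(Real.cosh t * (Real.exp (-(x*Real.cosh t)) * Real.cosh (ν*t)))) x :=
      key.2
    convert h2 using 1
    rw [integral_neg]
    have heq : ∀ t : ℝ, Real.cosh t * (Real.exp (-(x*Real.cosh t)) * Real.cosh (ν*t))
        = (Real.exp (-(x*Real.cosh t)) * Real.cosh ((ν+1)*t)) / 2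
          + (Real.exp (-(x*Real.cosh t)) * Real.cosh ((ν-1)*t)) / 2 := by
      intro t
      have e1 : (ν+1)*t = ν*t + t := by ring
      have e2 : (ν-1)*t = ν*t - t := by ring
      rw [e1, e2, Real.cosh_add, Real.cosh_sub]
      ring
    rw [neg_inj, add_div]
    calc besselK (ν+1) x / 2 + besselK (ν-1) x / 2
        = ∫ t in Ioi (0:ℝ), ((Real.exp (-(x*Real.cosh t)) * Real.cosh ((ν+1)*t)) / 2
            + (Real.exp (-(x*Real.cosh t)) * Real.cosh ((ν-1)*t)) / 2) := by
          rw [integral_add ((besselK_kernel_int hx).div_const 2)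
            ((besselK_kernel_int hx).div_const 2), integral_div, integral_div]
          rfl
      _ = ∫ t in Ioi (0:ℝ), Real.cosh t * (Real.exp (-(x*Real.cosh t)) * Real.cosh (ν*t)) := by
          exact (integral_congr_ae (ae_of_all _ fun t => (heq t).symm))
  · -- bound
    refine ae_of_all _ fun t => fun y hy => ?_
    have hy2 : x/2 < y := by
      have := abs_lt.1 (mem_ball_iff_norm.1 hy)
      linarith [this.1]
    rw [norm_neg, Real.norm_eq_abs, abs_mul, abs_of_pos (Real.cosh_pos _), abs_mul,
      abs_of_nonneg (Real.exp_nonneg _), abs_of_pos (Real.cosh_pos _)]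
    have : Real.exp (-(y*Real.cosh t)) ≤ Real.exp (-((x/2)*Real.cosh t)) := by
      apply Real.exp_le_exp.2
      have := (Real.cosh_pos t)
      nlinarith
    show _ ≤ Real.cosh t * (Real.exp (-((x/2)*Real.cosh t)) * Real.cosh (ν*t))
    exact mul_le_mul_of_nonneg_left
      (mul_le_mul_of_nonneg_right this (Real.cosh_pos _).le) (Real.cosh_pos _).le
  · -- bound integrable
    apply bessel_int_dom (by continuity) (|ν| + 1) 1 (by linarith : (0:ℝ) < x/2)
    intro t ht
    rw [abs_mul, abs_of_pos (Real.cosh_pos _), abs_mul, abs_of_nonneg (Real.exp_nonneg _),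
      abs_of_pos (Real.cosh_pos _), one_mul]
    have hc1 : Real.cosh t ≤ Real.exp t := by
      have := bessel_cosh_le t
      rwa [abs_of_pos ht] at this
    have hc2 : Real.cosh (ν*t) ≤ Real.exp (|ν| * t) := by
      have := bessel_cosh_le (ν*t)
      rwa [abs_mul, abs_of_pos ht] at this
    calc Real.cosh t * (Real.exp (-(x/2*Real.cosh t)) * Real.cosh (ν*t))
        ≤ Real.exp t * (Real.exp (-(x/2*Real.cosh t)) * Real.exp (|ν| * t)) := by
          gcongr <;> first | positivity | assumption
      _ = Real.exp ((|ν| + 1) * t - x/2*Real.cosh t) := by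
          rw [← Real.exp_add, ← Real.exp_add]; ring_nf
  · -- differentiability in y
    refine ae_of_all _ fun t => fun y _ => ?_
    have h1 : HasDerivAt (fun y : ℝ => -(y*Real.cosh t)) (-Real.cosh t) y := by
      exact ((hasDerivAt_id' y).mul_const (Real.cosh t)).neg.congr_deriv (by ring)
    have h2 := (h1.exp).mul_const (Real.cosh (ν*t))
    refine h2.congr_deriv ?_
    ring

lemma besselK_recurrence (ν : ℝ) {x : ℝ} (hx : 0 < x) :
    besselK (ν+1) x - besselK (ν-1) x = 2*ν/x * besselK ν x := by
  set E : ℝ → ℝ := fun t => Real.exp (-(x*Real.cosh t)) with hE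
  have hg' : ∀ t : ℝ, HasDerivAt (fun t => E t * Real.sinh (ν*t))
      (ν * (E t * Real.cosh (ν*t)) - x/2 * (E t * Real.cosh ((ν+1)*t))
        + x/2 * (E t * Real.cosh ((ν-1)*t))) t := by
    intro t
    have h1 : HasDerivAt (fun t : ℝ => -(x*Real.cosh t)) (-(x*Real.sinh t)) t := by
      exact ((Real.hasDerivAt_cosh t).const_mul x).neg
    have h2 : HasDerivAt (fun t : ℝ => Real.sinh (ν*t)) (Real.cosh (ν*t) * ν) t := by
      have := (Real.hasDerivAt_sinh (ν*t)).comp t ((hasDerivAt_id t).const_mul ν)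
      simpa [Function.comp_def] using this
    have h3 := (h1.exp).mul h2
    refine h3.congr_deriv ?_
    have e1 : (ν+1)*t = ν*t + t := by ring
    have e2 : (ν-1)*t = ν*t - t := by ring
    rw [e1, e2, Real.cosh_add, Real.cosh_sub, hE]
    ring
  have hFTC := integral_Ioi_of_hasDerivAt_of_tendsto (a := (0:ℝ))
    (f := fun t => E t * Real.sinh (ν*t))
    (f' := fun t => ν * (E t * Real.cosh (ν*t)) - x/2 * (E t * Real.cosh ((ν+1)*t))
        + x/2 * (E t * Real.cosh ((ν-1)*t))) (m := 0)
    (((Real.continuous_exp.comp (by continuity)).mul (by continuity)).continuousWithinAt)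
    (fun t _ => hg' t) ?_ ?_
  · -- conclude
    simp only [mul_zero, Real.sinh_zero, zero_sub, neg_zero, sub_zero] at hFTC
    have hsplit : (∫ t in Ioi (0:ℝ), (ν * (E t * Real.cosh (ν*t))
        - x/2 * (E t * Real.cosh ((ν+1)*t)) + x/2 * (E t * Real.cosh ((ν-1)*t))))
        = ν * besselK ν x - x/2 * besselK (ν+1) x + x/2 * besselK (ν-1) x := by
      have i1 : IntegrableOn (fun t => ν * (E t * Real.cosh (ν*t))) (Ioi 0) := by
        exact (besselK_kernel_int hx).const_mul ν
      have i2 : IntegrableOn (fun t => x/2 * (E t * Real.cosh ((ν+1)*t))) (Ioi 0) := by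
        exact (besselK_kernel_int hx).const_mul (x/2)
      have i3 : IntegrableOn (fun t => x/2 * (E t * Real.cosh ((ν-1)*t))) (Ioi 0) := by
        exact (besselK_kernel_int hx).const_mul (x/2)
      have i12 : IntegrableOn (fun t => ν * (E t * Real.cosh (ν*t))
          - x/2 * (E t * Real.cosh ((ν+1)*t))) (Ioi 0) := by
        exact i1.sub i2
      rw [integral_add i12 i3, integral_sub i1 i2,
        integral_const_mul, integral_const_mul, integral_const_mul]
      rfl
    rw [hsplit] at hFTC
    field_simp
    linarith
  · -- integrability of g'
    apply bessel_int_dom ?_ (|ν| + 1) (|ν| + x) hx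
    · intro t ht
      have hc2 : Real.cosh (ν*t) ≤ Real.exp (|ν| * t) := by
        have := bessel_cosh_le (ν*t)
        rwa [abs_mul, abs_of_pos ht] at this
      have hc3 : Real.cosh ((ν+1)*t) ≤ Real.exp ((|ν|+1) * t) := by
        have h := bessel_cosh_le ((ν+1)*t)
        refine h.trans (Real.exp_le_exp.2 ?_)
        rw [abs_mul, abs_of_pos ht]
        have : |ν+1| ≤ |ν| + 1 := abs_add_le ν 1 |>.trans (by simp)
        nlinarith
      have hc4 : Real.cosh ((ν-1)*t) ≤ Real.exp ((|ν|+1) * t) := by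
        have h := bessel_cosh_le ((ν-1)*t)
        refine h.trans (Real.exp_le_exp.2 ?_)
        rw [abs_mul, abs_of_pos ht]
        have : |ν-1| ≤ |ν| + 1 := (abs_sub ν 1).trans (by simp)
        nlinarith
      have hc2' : Real.cosh (ν*t) ≤ Real.exp ((|ν|+1) * t) := by
        refine hc2.trans (Real.exp_le_exp.2 ?_)
        nlinarith [abs_nonneg ν]
      have hEpos : 0 ≤ E t := Real.exp_nonneg _
      set R := E t * Real.exp ((|ν|+1) * t) with hR
      have hRnn : 0 ≤ R := mul_nonneg hEpos (Real.exp_nonneg _)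
      have b1 : |ν * (E t * Real.cosh (ν*t))| ≤ |ν| * R := by
        rw [abs_mul]
        refine mul_le_mul_of_nonneg_left ?_ (abs_nonneg ν)
        rw [abs_of_nonneg (mul_nonneg hEpos (Real.cosh_pos _).le)]
        exact mul_le_mul_of_nonneg_left hc2' hEpos
      have b2 : |x/2 * (E t * Real.cosh ((ν+1)*t))| ≤ x/2 * R := by
        rw [abs_mul, abs_of_nonneg (by linarith : (0:ℝ) ≤ x/2)]
        refine mul_le_mul_of_nonneg_left ?_ (by linarith)
        rw [abs_of_nonneg (mul_nonneg hEpos (Real.cosh_pos _).le)]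
        exact mul_le_mul_of_nonneg_left hc3 hEpos
      have b3 : |x/2 * (E t * Real.cosh ((ν-1)*t))| ≤ x/2 * R := by
        rw [abs_mul, abs_of_nonneg (by linarith : (0:ℝ) ≤ x/2)]
        refine mul_le_mul_of_nonneg_left ?_ (by linarith)
        rw [abs_of_nonneg (mul_nonneg hEpos (Real.cosh_pos _).le)]
        exact mul_le_mul_of_nonneg_left hc4 hEpos
      have hfinal : |ν * (E t * Real.cosh (ν*t)) - x/2 * (E t * Real.cosh ((ν+1)*t))
          + x/2 * (E t * Real.cosh ((ν-1)*t))|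
          ≤ (|ν| + x) * R := by
        calc |ν * (E t * Real.cosh (ν*t)) - x/2 * (E t * Real.cosh ((ν+1)*t))
            + x/2 * (E t * Real.cosh ((ν-1)*t))|
            ≤ |ν * (E t * Real.cosh (ν*t)) - x/2 * (E t * Real.cosh ((ν+1)*t))|
              + |x/2 * (E t * Real.cosh ((ν-1)*t))| := abs_add_le _ _
          _ ≤ |ν * (E t * Real.cosh (ν*t))| + |x/2 * (E t * Real.cosh ((ν+1)*t))|
              + |x/2 * (E t * Real.cosh ((ν-1)*t))| := by
              linarith [abs_sub (ν * (E t * Real.cosh (ν*t))) (x/2 * (E t * Real.cosh ((ν+1)*t)))]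
          _ ≤ (|ν| + x) * R := by linarith
      refine hfinal.trans (le_of_eq ?_)
      rw [hR, hE, ← Real.exp_add]
      ring_nf
    · have hEc : Continuous E := Real.continuous_exp.comp
        ((continuous_const.mul Real.continuous_cosh).neg)
      have c1 : Continuous fun t : ℝ => Real.cosh (ν*t) :=
        Real.continuous_cosh.comp (continuous_const.mul continuous_id)
      have c2 : Continuous fun t : ℝ => Real.cosh ((ν+1)*t) :=
        Real.continuous_cosh.comp (continuous_const.mul continuous_id)
      have c3 : Continuous fun t : ℝ => Real.cosh ((ν-1)*t) :=
        Real.continuous_cosh.comp (continuous_const.mul continuous_id)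
      exact ((continuous_const.mul (hEc.mul c1)).sub
        (continuous_const.mul (hEc.mul c2))).add (continuous_const.mul (hEc.mul c3))
  · -- tendsto 0
    apply squeeze_zero_norm' (a := fun t => Real.exp (-x + (|ν| - x/2*t) * t))
    · filter_upwards [eventually_ge_atTop (0:ℝ)] with t ht
      rw [Real.norm_eq_abs, abs_mul, abs_of_nonneg (Real.exp_nonneg _)]
      have h1 : |Real.sinh (ν*t)| ≤ Real.exp (|ν| * t) := by
        rw [Real.abs_sinh]
        calc Real.sinh |ν*t| ≤ Real.cosh |ν*t| := by
              nlinarith [Real.exp_pos (-|ν*t|), Real.cosh_eq |ν*t|, Real.sinh_eq |ν*t|]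
          _ ≤ Real.exp |ν*t| := by
              have := bessel_cosh_le |ν*t|
              rwa [abs_abs] at this
          _ ≤ Real.exp (|ν| * t) := by
              apply Real.exp_le_exp.2
              rw [abs_mul, abs_of_nonneg ht]
      calc E t * |Real.sinh (ν*t)| ≤ E t * Real.exp (|ν| * t) :=
            mul_le_mul_of_nonneg_left h1 (Real.exp_nonneg _)
        _ ≤ Real.exp (-x + (|ν| - x/2*t) * t) := by
            rw [hE, ← Real.exp_add]
            apply Real.exp_le_exp.2
            have := bessel_cosh_lb t
            nlinarith
    · have hlin : Tendsto (fun t : ℝ => |ν| - x/2*t) atTop atBot := by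
        have h1 : Tendsto (fun t : ℝ => -(x/2) * t) atTop atBot :=
          (tendsto_const_mul_atBot_of_neg (by linarith)).2 tendsto_id
        have h2 := tendsto_atBot_add_const_left atTop (|ν|) h1
        refine h2.congr fun t => by ring
      have hexp : Tendsto (fun t : ℝ => -x + (|ν| - x/2*t) * t) atTop atBot :=
        tendsto_atBot_add_const_left atTop (-x) (hlin.atBot_mul_atTop₀ tendsto_id)
      exact Real.tendsto_exp_atBot.comp hexp

lemma hasDerivAt_besselK_fst (ν : ℝ) {x : ℝ} (hx : 0 < x) :
    HasDerivAt (besselK ν) (ν/x * besselK ν x - besselK (ν+1) x) x := by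
  have h := hasDerivAt_besselK ν hx
  have hrec := besselK_recurrence ν hx
  convert h using 1
  have hx' : x ≠ 0 := ne_of_gt hx
  field_simp at hrec ⊢
  linarith

lemma hasDerivAt_besselK_snd (ν : ℝ) {x : ℝ} (hx : 0 < x) :
    HasDerivAt (besselK (ν+1)) (-besselK ν x - (ν+1)/x * besselK (ν+1) x) x := by
  have h := hasDerivAt_besselK (ν+1) hx
  have hrec := besselK_recurrence (ν+1) hx
  have e1 : ν + 1 - 1 = ν := by ring
  rw [e1] at hrec h
  convert h using 1
  have hx' : x ≠ 0 := ne_of_gt hx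
  field_simp at hrec ⊢
  linarith

lemma besselK_le (ν : ℝ) {x : ℝ} (hx : 1 ≤ x) :
    besselK ν x ≤ (∫ t in Ioi (0:ℝ), Real.exp (|ν| * t - t^2/2)) * Real.exp (-x) := by
  have hx0 : (0:ℝ) < x := by linarith
  have hint : Integrable (fun t : ℝ => Real.exp (|ν| * t - t^2/2)) := by
    have := bessel_int_gauss (|ν|) (show (0:ℝ) < 1/2 by norm_num)
    refine this.congr (ae_of_all _ fun t => ?_)
    ring_nf
  rw [← integral_mul_const]
  apply setIntegral_mono_on (besselK_kernel_int hx0)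
    ((hint.mul_const (Real.exp (-x))).integrableOn) measurableSet_Ioi
  intro t ht
  have hc : Real.cosh (ν*t) ≤ Real.exp (|ν| * t) := by
    have := bessel_cosh_le (ν*t)
    rwa [abs_mul, abs_of_pos (show (0:ℝ) < t from ht)] at this
  have hlb := bessel_cosh_lb t
  calc Real.exp (-(x*Real.cosh t)) * Real.cosh (ν*t)
      ≤ Real.exp (-(x*Real.cosh t)) * Real.exp (|ν| * t) :=
        mul_le_mul_of_nonneg_left hc (Real.exp_nonneg _)
    _ ≤ Real.exp (|ν| * t - t^2/2) * Real.exp (-x) := by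
        rw [← Real.exp_add, ← Real.exp_add]
        apply Real.exp_le_exp.2
        nlinarith [sq_nonneg t]

lemma besselI_gamma_pos {ν : ℝ} (hν : 0 ≤ ν) (k : ℕ) : 0 < Real.Gamma ((k:ℝ)+ν+1) :=
  Real.Gamma_pos_of_pos (by positivity)

lemma besselI_gamma_ge {ν : ℝ} (hν : 0 ≤ ν) (k : ℕ) :
    (k.factorial : ℝ) * Real.Gamma (ν+1) ≤ Real.Gamma ((k:ℝ)+ν+1) := by
  induction k with
  | zero => simp
  | succ n ih =>
    have h1 : ((n+1:ℕ):ℝ) + ν + 1 = ((n:ℝ)+ν+1) + 1 := by push_cast; ring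
    rw [h1, Real.Gamma_add_one (s := (n:ℝ)+ν+1) (by positivity)]
    have hp := besselI_gamma_pos hν n
    have step1 : ((n+1:ℕ).factorial : ℝ) * Real.Gamma (ν+1)
        = ((n:ℝ)+1) * ((n.factorial:ℝ) * Real.Gamma (ν+1)) := by
      push_cast [Nat.factorial_succ]; ring
    rw [step1]
    calc ((n:ℝ)+1) * ((n.factorial:ℝ) * Real.Gamma (ν+1))
        ≤ ((n:ℝ)+1) * Real.Gamma ((n:ℝ)+ν+1) :=
          mul_le_mul_of_nonneg_left ih (by positivity)
      _ ≤ ((n:ℝ)+ν+1) * Real.Gamma ((n:ℝ)+ν+1) :=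
          mul_le_mul_of_nonneg_right (by linarith) hp.le

lemma besselI_gamma_ge' {ν : ℝ} (hν : 0 ≤ ν) (k : ℕ) :
    Real.Gamma (ν+1) ≤ Real.Gamma ((k:ℝ)+ν+1) := by
  have h := besselI_gamma_ge hν k
  have hf : (1:ℝ) ≤ (k.factorial : ℝ) := by exact_mod_cast k.factorial_pos
  have hg : (0:ℝ) < Real.Gamma (ν+1) := Real.Gamma_pos_of_pos (by linarith)
  nlinarith

lemma besselI_term_eq {ν y : ℝ} (hy : 0 < y) (k : ℕ) :
    (y/2)^(2*(k:ℝ)+ν) = ((y/2)^2)^k * (y/2)^ν := by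
  have hz : (0:ℝ) < y/2 := by linarith
  have h2 : (2:ℝ)*(k:ℝ) = ((2*k : ℕ) : ℝ) := by push_cast; ring
  rw [Real.rpow_add hz, h2, Real.rpow_natCast, pow_mul]

lemma bessel_summable_aux (C q : ℝ) : Summable (fun k : ℕ => C * q^k / (k.factorial : ℝ)) := by
  have := (Real.summable_pow_div_factorial q).mul_left C
  refine this.congr fun k => by ring

lemma summable_besselI {ν y : ℝ} (hν : 0 ≤ ν) (hy : 0 < y) :
    Summable (fun k : ℕ => (y/2)^(2*(k:ℝ)+ν) / ((k.factorial:ℝ) * Real.Gamma ((k:ℝ)+ν+1))) := by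
  have hz : (0:ℝ) < y/2 := by linarith
  have hg : (0:ℝ) < Real.Gamma (ν+1) := Real.Gamma_pos_of_pos (by linarith)
  apply Summable.of_nonneg_of_le (f := fun k : ℕ => ((y/2)^ν/Real.Gamma (ν+1)) * ((y/2)^2)^k
    / (k.factorial:ℝ))
  · intro k
    have := besselI_gamma_pos hν k
    positivity
  · intro k
    rw [besselI_term_eq hy k]
    have hgk := besselI_gamma_pos hν k
    have hge := besselI_gamma_ge' hν k
    calc ((y/2)^2)^k * (y/2)^ν / ((k.factorial:ℝ) * Real.Gamma ((k:ℝ)+ν+1))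
        ≤ ((y/2)^2)^k * (y/2)^ν / ((k.factorial:ℝ) * Real.Gamma (ν+1)) := by
          gcongr <;> first
            | positivity
            | exact_mod_cast k.factorial_pos
            | exact hge
      _ = ((y/2)^ν/Real.Gamma (ν+1)) * ((y/2)^2)^k / (k.factorial:ℝ) := by
          field_simp
  · exact bessel_summable_aux _ _

lemma hasDerivAt_besselI_term (s c : ℝ) (hc : 0 < c) {y : ℝ} (hy : 0 < y) :
    HasDerivAt (fun w : ℝ => (w/2)^s / c) (s * (y/2)^(s-1) / (2*c)) y := by
  have h0 : HasDerivAt (fun w : ℝ => w/2) (1/2) y := (hasDerivAt_id y).div_const 2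
  have h1 : HasDerivAt (fun w : ℝ => w^s) (s * (y/2)^(s-1)) (y/2) :=
    Real.hasDerivAt_rpow_const (Or.inl (by positivity))
  have h2 := (h1.comp y h0).div_const c
  refine h2.congr_deriv ?_
  ring

lemma bessel_u_half {ν : ℝ} (hν : 0 ≤ ν) {w : ℝ} (hw : 0 < w) (k : ℕ) :
    (2*(k:ℝ)+ν) * w^(2*(k:ℝ)+ν-1) / (2 * ((k.factorial:ℝ) * Real.Gamma ((k:ℝ)+ν+1)))
      ≤ ((2+ν) * w^(ν-1) / (2*Real.Gamma (ν+1))) * (2*w^2)^k / (k.factorial:ℝ) := by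
  have hsplit : w^(2*(k:ℝ)+ν-1) = w^(ν-1) * (w^2)^k := by
    have h2 : 2*(k:ℝ)+ν-1 = (ν-1) + 2*(k:ℝ) := by ring
    have h3 : (2:ℝ)*(k:ℝ) = ((2*k : ℕ) : ℝ) := by push_cast; ring
    rw [h2, Real.rpow_add hw, h3, Real.rpow_natCast, pow_mul]
  have h1 : Real.Gamma (ν+1) ≤ Real.Gamma ((k:ℝ)+ν+1) := besselI_gamma_ge' hν k
  have hgk := besselI_gamma_pos hν k
  have hg : (0:ℝ) < Real.Gamma (ν+1) := Real.Gamma_pos_of_pos (by linarith)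
  have hwp : (0:ℝ) < w^(ν-1) := Real.rpow_pos_of_pos hw _
  have hpoly : 2*(k:ℝ)+ν ≤ (2+ν) * 2^k := by
    have hk : (k:ℝ) ≤ 2^k := by
      have := (Nat.lt_two_pow_self : k < 2^k).le
      exact_mod_cast Nat.cast_le.2 this
    have h1' : (1:ℝ) ≤ 2^k := one_le_pow₀ (by norm_num : (1:ℝ) ≤ 2)
    nlinarith
  rw [hsplit]
  have hfk : (0:ℝ) < (k.factorial:ℝ) := by exact_mod_cast k.factorial_pos
  calc (2*(k:ℝ)+ν) * (w^(ν-1) * (w^2)^k) / (2 * ((k.factorial:ℝ) * Real.Gamma ((k:ℝ)+ν+1)))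
      ≤ ((2+ν)*2^k) * (w^(ν-1) * (w^2)^k) / (2 * ((k.factorial:ℝ) * Real.Gamma (ν+1))) := by
        gcongr <;> first | positivity | exact h1 | exact hpoly
    _ = ((2+ν) * w^(ν-1) / (2*Real.Gamma (ν+1))) * (2*w^2)^k / (k.factorial:ℝ) := by
        rw [mul_pow]; field_simp

lemma hasDerivAt_besselI_raw {ν x : ℝ} (hν : 0 ≤ ν) (hx : 0 < x) :
    HasDerivAt (besselI ν)
      (∑' k : ℕ, (2*(k:ℝ)+ν) * (x/2)^(2*(k:ℝ)+ν-1)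
        / (2 * ((k.factorial:ℝ) * Real.Gamma ((k:ℝ)+ν+1)))) x := by
  have hlo0 : (0:ℝ) < x/4 := by linarith
  have hhi0 : (0:ℝ) < (x+1)/2 := by linarith
  have hmemx : x ∈ Ioo (x/2) (x+1) := ⟨by linarith, by linarith⟩
  show HasDerivAt (fun w => ∑' k : ℕ,
      (w/2)^(2*(k:ℝ)+ν) / ((k.factorial:ℝ) * Real.Gamma ((k:ℝ)+ν+1))) _ x
  apply hasDerivAt_tsum_of_isPreconnected
    (u := fun k : ℕ => (2*(k:ℝ)+ν) * ((x/4)^(2*(k:ℝ)+ν-1) + ((x+1)/2)^(2*(k:ℝ)+ν-1))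
      / (2 * ((k.factorial:ℝ) * Real.Gamma ((k:ℝ)+ν+1))))
    (g' := fun k y => (2*(k:ℝ)+ν) * (y/2)^(2*(k:ℝ)+ν-1)
      / (2 * ((k.factorial:ℝ) * Real.Gamma ((k:ℝ)+ν+1))))
    (t := Ioo (x/2) (x+1)) (y₀ := x)
  · -- Summable u
    apply Summable.of_nonneg_of_le (f := fun k : ℕ =>
      ((2+ν) * (x/4)^(ν-1) / (2*Real.Gamma (ν+1))) * (2*(x/4)^2)^k / (k.factorial:ℝ)
      + ((2+ν) * ((x+1)/2)^(ν-1) / (2*Real.Gamma (ν+1))) * (2*((x+1)/2)^2)^k / (k.factorial:ℝ))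
    · intro k
      have hgk := besselI_gamma_pos hν k
      positivity
    · intro k
      have hbound1 := bessel_u_half hν hlo0 k
      have hbound2 := bessel_u_half hν hhi0 k
      have hsplit : (2*(k:ℝ)+ν) * ((x/4)^(2*(k:ℝ)+ν-1) + ((x+1)/2)^(2*(k:ℝ)+ν-1))
          / (2 * ((k.factorial:ℝ) * Real.Gamma ((k:ℝ)+ν+1)))
          = (2*(k:ℝ)+ν) * (x/4)^(2*(k:ℝ)+ν-1) / (2 * ((k.factorial:ℝ) * Real.Gamma ((k:ℝ)+ν+1)))
          + (2*(k:ℝ)+ν) * ((x+1)/2)^(2*(k:ℝ)+ν-1)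
            / (2 * ((k.factorial:ℝ) * Real.Gamma ((k:ℝ)+ν+1))) := by
        ring
      rw [hsplit]
      exact add_le_add hbound1 hbound2
    · exact (bessel_summable_aux _ _).add (bessel_summable_aux _ _)
  · exact isOpen_Ioo
  · exact isPreconnected_Ioo
  · -- HasDerivAt of each term
    intro k y hy
    have hy0 : 0 < y := lt_trans (by linarith) hy.1
    have hck : (0:ℝ) < (k.factorial:ℝ) * Real.Gamma ((k:ℝ)+ν+1) := by
      have := besselI_gamma_pos hν k
      positivity
    exact hasDerivAt_besselI_term _ _ hck hy0
  · -- bound on derivatives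
    intro k y hy
    have hy0 : 0 < y := lt_trans (by linarith) hy.1
    have hck : (0:ℝ) < (k.factorial:ℝ) * Real.Gamma ((k:ℝ)+ν+1) := by
      have := besselI_gamma_pos hν k
      positivity
    have hnn : (0:ℝ) ≤ (2*(k:ℝ)+ν) * (y/2)^(2*(k:ℝ)+ν-1)
        / (2 * ((k.factorial:ℝ) * Real.Gamma ((k:ℝ)+ν+1))) := by positivity
    rw [Real.norm_eq_abs, abs_of_nonneg hnn]
    have hkey : (y/2)^(2*(k:ℝ)+ν-1) ≤ (x/4)^(2*(k:ℝ)+ν-1) + ((x+1)/2)^(2*(k:ℝ)+ν-1) := by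
      rcases le_or_gt 0 (2*(k:ℝ)+ν-1) with hs|hs
      · have h1 : (y/2)^(2*(k:ℝ)+ν-1) ≤ ((x+1)/2)^(2*(k:ℝ)+ν-1) :=
          Real.rpow_le_rpow (by positivity) (by linarith [hy.2]) hs
        have h2 : (0:ℝ) ≤ (x/4)^(2*(k:ℝ)+ν-1) := (Real.rpow_pos_of_pos hlo0 _).le
        linarith
      · have h1 : (y/2)^(2*(k:ℝ)+ν-1) ≤ (x/4)^(2*(k:ℝ)+ν-1) :=
          Real.rpow_le_rpow_of_nonpos hlo0 (by linarith [hy.1]) hs.le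
        have h2 : (0:ℝ) ≤ ((x+1)/2)^(2*(k:ℝ)+ν-1) := (Real.rpow_pos_of_pos hhi0 _).le
        linarith
    gcongr
  · -- bound
    exact hmemx
  · exact summable_besselI hν hx
  · exact hmemx

lemma hasDerivAt_besselI_fst {ν x : ℝ} (hν : 0 ≤ ν) (hx : 0 < x) :
    HasDerivAt (besselI ν) (besselI (ν+1) x + ν/x * besselI ν x) x := by
  have h := hasDerivAt_besselI_raw hν hx
  convert h using 1
  have hz : (0:ℝ) < x/2 := by linarith
  set f : ℕ → ℝ := fun k => (k:ℝ) * (x/2)^(2*(k:ℝ)+ν-1)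
    / ((k.factorial:ℝ) * Real.Gamma ((k:ℝ)+ν+1)) with hf
  have hshift : ∀ j : ℕ, f (j+1)
      = (x/2)^(2*((j:ℕ):ℝ)+(ν+1)) / ((j.factorial:ℝ) * Real.Gamma ((j:ℝ)+(ν+1)+1)) := by
    intro j
    rw [hf]
    have hexp : 2*(((j+1:ℕ)):ℝ)+ν-1 = 2*((j:ℕ):ℝ)+(ν+1) := by push_cast; ring
    have hfact : (((j+1:ℕ)).factorial:ℝ) = ((j:ℝ)+1) * (j.factorial:ℝ) := by
      push_cast [Nat.factorial_succ]; ring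
    have hgam : (((j+1:ℕ)):ℝ)+ν+1 = ((j:ℝ)+(ν+1))+1 := by push_cast; ring
    simp only [hexp, hfact, hgam]
    have hcast : (((j+1:ℕ)):ℝ) = (j:ℝ)+1 := by push_cast; ring
    rw [hcast]
    have hg2 : ((j:ℝ)+(ν+1))+1 = (j:ℝ)+(ν+1)+1 := by ring
    have hgadd : Real.Gamma (((j:ℝ)+(ν+1))+1) = ((j:ℝ)+ν+1) * Real.Gamma ((j:ℝ)+ν+1) := by
      rw [show ((j:ℝ)+(ν+1))+1 = ((j:ℝ)+ν+1)+1 by ring,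
        Real.Gamma_add_one (s := (j:ℝ)+ν+1) (by positivity)]
    rw [show (j:ℝ)+(ν+1)+1 = ((j:ℝ)+(ν+1))+1 by ring, hgadd]
    have h1 : (0:ℝ) < (j.factorial:ℝ) := by exact_mod_cast j.factorial_pos
    have h2 := besselI_gamma_pos hν j
    field_simp
  have hsf : Summable f := by
    rw [← summable_nat_add_iff 1]
    exact (summable_besselI (show (0:ℝ) ≤ ν+1 by linarith) hx).congr fun j => (hshift j).symm
  have hse : Summable (fun k : ℕ => ν/x * ((x/2)^(2*(k:ℝ)+ν)
      / ((k.factorial:ℝ) * Real.Gamma ((k:ℝ)+ν+1)))) :=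
    (summable_besselI hν hx).mul_left _
  have htsum_f : ∑' k, f k = besselI (ν+1) x := by
    rw [Summable.tsum_eq_zero_add hsf]
    have hf0 : f 0 = 0 := by simp [hf]
    rw [hf0, zero_add]
    exact tsum_congr hshift
  have hterm : ∀ k : ℕ, (2*(k:ℝ)+ν) * (x/2)^(2*(k:ℝ)+ν-1)
      / (2 * ((k.factorial:ℝ) * Real.Gamma ((k:ℝ)+ν+1)))
      = ν/x * ((x/2)^(2*(k:ℝ)+ν) / ((k.factorial:ℝ) * Real.Gamma ((k:ℝ)+ν+1))) + f k := by
    intro k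
    simp only [hf]
    have hp : (x/2)^(2*(k:ℝ)+ν-1) = (x/2)^(2*(k:ℝ)+ν) / (x/2) := by
      rw [Real.rpow_sub hz, Real.rpow_one]
    rw [hp]
    have h1 : (0:ℝ) < (k.factorial:ℝ) := by exact_mod_cast k.factorial_pos
    have h2 := besselI_gamma_pos hν k
    have hx0 : x ≠ 0 := ne_of_gt hx
    field_simp
    ring
  calc besselI (ν+1) x + ν/x * besselI ν x
      = (∑' k : ℕ, ν/x * ((x/2)^(2*(k:ℝ)+ν) / ((k.factorial:ℝ) * Real.Gamma ((k:ℝ)+ν+1))))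
        + ∑' k : ℕ, f k := by
        rw [htsum_f, tsum_mul_left]
        show _ = ν/x * besselI ν x + besselI (ν+1) x
        ring
    _ = ∑' k : ℕ, (ν/x * ((x/2)^(2*(k:ℝ)+ν) / ((k.factorial:ℝ) * Real.Gamma ((k:ℝ)+ν+1))) + f k) :=
        (Summable.tsum_add hse hsf).symm
    _ = _ := by
        exact tsum_congr fun k => (hterm k).symm

lemma hasDerivAt_besselI_snd {ν x : ℝ} (hν : 0 ≤ ν) (hx : 0 < x) :
    HasDerivAt (besselI (ν+1)) (besselI ν x - (ν+1)/x * besselI (ν+1) x) x := by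
  have h := hasDerivAt_besselI_raw (show (0:ℝ) ≤ ν+1 by linarith) hx
  convert h using 1
  have hz : (0:ℝ) < x/2 := by linarith
  have hs1 : Summable (fun k : ℕ => (x/2)^(2*(k:ℝ)+ν)
      / ((k.factorial:ℝ) * Real.Gamma ((k:ℝ)+ν+1))) := summable_besselI hν hx
  have hs2 : Summable (fun k : ℕ => (ν+1)/x * ((x/2)^(2*(k:ℝ)+(ν+1))
      / ((k.factorial:ℝ) * Real.Gamma ((k:ℝ)+(ν+1)+1)))) :=
    (summable_besselI (show (0:ℝ) ≤ ν+1 by linarith) hx).mul_left _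
  have hterm : ∀ k : ℕ, (x/2)^(2*(k:ℝ)+ν) / ((k.factorial:ℝ) * Real.Gamma ((k:ℝ)+ν+1))
      - (ν+1)/x * ((x/2)^(2*(k:ℝ)+(ν+1)) / ((k.factorial:ℝ) * Real.Gamma ((k:ℝ)+(ν+1)+1)))
      = (2*(k:ℝ)+(ν+1)) * (x/2)^(2*(k:ℝ)+(ν+1)-1)
        / (2 * ((k.factorial:ℝ) * Real.Gamma ((k:ℝ)+(ν+1)+1))) := by
    intro k
    have hgadd : Real.Gamma ((k:ℝ)+(ν+1)+1) = ((k:ℝ)+ν+1) * Real.Gamma ((k:ℝ)+ν+1) := by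
      rw [show (k:ℝ)+(ν+1)+1 = ((k:ℝ)+ν+1)+1 by ring,
        Real.Gamma_add_one (s := (k:ℝ)+ν+1) (by positivity)]
    have hp1 : (x/2)^(2*(k:ℝ)+(ν+1)) = (x/2)^(2*(k:ℝ)+ν) * (x/2) := by
      rw [show 2*(k:ℝ)+(ν+1) = (2*(k:ℝ)+ν) + 1 by ring, Real.rpow_add hz, Real.rpow_one]
    have hp2 : (x/2)^(2*(k:ℝ)+(ν+1)-1) = (x/2)^(2*(k:ℝ)+ν) := by
      rw [show 2*(k:ℝ)+(ν+1)-1 = 2*(k:ℝ)+ν by ring]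
    rw [hgadd, hp1, hp2]
    have h1 : (0:ℝ) < (k.factorial:ℝ) := by exact_mod_cast k.factorial_pos
    have h2 := besselI_gamma_pos hν k
    have hx0 : x ≠ 0 := ne_of_gt hx
    have h3 : (k:ℝ)+ν+1 ≠ 0 := by positivity
    field_simp
    ring
  calc besselI ν x - (ν+1)/x * besselI (ν+1) x
      = (∑' k : ℕ, (x/2)^(2*(k:ℝ)+ν) / ((k.factorial:ℝ) * Real.Gamma ((k:ℝ)+ν+1)))
        - ∑' k : ℕ, (ν+1)/x * ((x/2)^(2*(k:ℝ)+(ν+1))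
          / ((k.factorial:ℝ) * Real.Gamma ((k:ℝ)+(ν+1)+1))) := by
        rw [tsum_mul_left]
        rfl
    _ = ∑' k : ℕ, ((x/2)^(2*(k:ℝ)+ν) / ((k.factorial:ℝ) * Real.Gamma ((k:ℝ)+ν+1))
        - (ν+1)/x * ((x/2)^(2*(k:ℝ)+(ν+1)) / ((k.factorial:ℝ) * Real.Gamma ((k:ℝ)+(ν+1)+1)))) :=
        (Summable.tsum_sub hs1 hs2).symm
    _ = _ := tsum_congr fun k => hterm k

lemma besselI_nonneg {ν y : ℝ} (hν : 0 ≤ ν) (hy : 0 < y) : 0 ≤ besselI ν y :=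
  tsum_nonneg fun k => by
    have := besselI_gamma_pos hν k
    have hz : (0:ℝ) < y/2 := by linarith
    positivity

lemma besselI_le {ν y : ℝ} (hν : 0 ≤ ν) (hy : 0 < y) :
    besselI ν y ≤ (y/2)^ν * Real.exp y / Real.Gamma (ν+1) := by
  have hz : (0:ℝ) < y/2 := by linarith
  have hg : (0:ℝ) < Real.Gamma (ν+1) := Real.Gamma_pos_of_pos (by linarith)
  set b : ℕ → ℝ := fun k => (y/2)^k / (k.factorial:ℝ) with hb
  have hbnn : ∀ k, 0 ≤ b k := fun k => by positivity
  have hbsum : Summable b := Real.summable_pow_div_factorial _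
  have hbexp : ∀ k, b k ≤ Real.exp (y/2) := by
    intro k
    calc b k ≤ ∑ i ∈ Finset.range (k+1), (y/2)^i/(i.factorial:ℝ) := by
          refine Finset.single_le_sum (f := fun i => (y/2)^i/(i.factorial:ℝ))
            (fun i _ => by positivity) (Finset.self_mem_range_succ k)
      _ ≤ Real.exp (y/2) := Real.sum_le_exp_of_nonneg hz.le _
  have hstep : ∀ k : ℕ, (y/2)^(2*(k:ℝ)+ν) / ((k.factorial:ℝ) * Real.Gamma ((k:ℝ)+ν+1))
      ≤ ((y/2)^ν/Real.Gamma (ν+1) * Real.exp (y/2)) * b k := by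
    intro k
    rw [besselI_term_eq hy k]
    have hsq : ((y/2)^2)^k = ((y/2)^k)^2 := by
      rw [← pow_mul, mul_comm, pow_mul]
    have hge := besselI_gamma_ge hν k
    have h1 : (0:ℝ) < (k.factorial:ℝ) := by exact_mod_cast k.factorial_pos
    have h2 := besselI_gamma_pos hν k
    calc ((y/2)^2)^k * (y/2)^ν / ((k.factorial:ℝ) * Real.Gamma ((k:ℝ)+ν+1))
        ≤ ((y/2)^2)^k * (y/2)^ν / ((k.factorial:ℝ) * ((k.factorial:ℝ) * Real.Gamma (ν+1))) := by
          gcongr <;> first | positivity | exact hge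
      _ = ((y/2)^ν/Real.Gamma (ν+1)) * (b k * b k) := by
          rw [hsq, hb]
          field_simp
      _ ≤ ((y/2)^ν/Real.Gamma (ν+1)) * (Real.exp (y/2) * b k) := by
          have := mul_le_mul_of_nonneg_right (hbexp k) (hbnn k)
          apply mul_le_mul_of_nonneg_left this (by positivity)
      _ = ((y/2)^ν/Real.Gamma (ν+1) * Real.exp (y/2)) * b k := by ring
  have htsum_b : ∑' k, b k ≤ Real.exp (y/2) :=
    Real.tsum_le_of_sum_range_le hbnn fun n => Real.sum_le_exp_of_nonneg hz.le n
  calc besselI ν y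
      ≤ ∑' k, ((y/2)^ν/Real.Gamma (ν+1) * Real.exp (y/2)) * b k :=
        Summable.tsum_le_tsum hstep (summable_besselI hν hy) (hbsum.mul_left _)
    _ = ((y/2)^ν/Real.Gamma (ν+1) * Real.exp (y/2)) * ∑' k, b k := tsum_mul_left
    _ ≤ ((y/2)^ν/Real.Gamma (ν+1) * Real.exp (y/2)) * Real.exp (y/2) := by
        apply mul_le_mul_of_nonneg_left htsum_b (by positivity)
    _ = (y/2)^ν * Real.exp y / Real.Gamma (ν+1) := by
        rw [show Real.exp y = Real.exp (y/2) * Real.exp (y/2) by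
          rw [← Real.exp_add]; ring_nf]
        ring

lemma bessel_decay {a b : ℝ} (ha : 0 < a) (hab : a < b) {ν ν' : ℝ} (hν : 0 ≤ ν) :
    Tendsto (fun x => x * besselI ν (a*x) * besselK ν' (b*x)) atTop (𝓝 0) := by
  have hb : 0 < b := lt_trans ha hab
  have hg : (0:ℝ) < Real.Gamma (ν+1) := Real.Gamma_pos_of_pos (by linarith)
  set C : ℝ := ∫ t in Ioi (0:ℝ), Real.exp (|ν'| * t - t^2/2) with hC
  have hCnn : 0 ≤ C := setIntegral_nonneg measurableSet_Ioi fun t _ => (Real.exp_nonneg _)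
  apply squeeze_zero'
    (g := fun x => ((a/2)^ν / Real.Gamma (ν+1) * C) * (x^(ν+1) * Real.exp (-(b-a)*x)))
  · filter_upwards [eventually_gt_atTop (0:ℝ)] with x hx
    have hax : 0 < a*x := by positivity
    exact mul_nonneg (mul_nonneg hx.le (besselI_nonneg hν hax)) (besselK_nonneg _ _)
  · filter_upwards [eventually_ge_atTop (max 1 (1/b))] with x hx
    have hx1 : (1:ℝ) ≤ x := le_trans (le_max_left _ _) hx
    have hx0 : (0:ℝ) < x := by linarith
    have hax : 0 < a*x := by positivity
    have hbx1 : (1:ℝ) ≤ b*x := by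
      have h1 : 1/b ≤ x := le_trans (le_max_right _ _) hx
      rw [div_le_iff₀ hb] at h1
      linarith [h1]
    have hIb := besselI_le hν hax
    have hKb := besselK_le ν' hbx1
    have hInn := besselI_nonneg hν hax
    have hKnn := besselK_nonneg ν' (b*x)
    calc x * besselI ν (a*x) * besselK ν' (b*x)
        ≤ x * besselI ν (a*x) * (C * Real.exp (-(b*x))) := by
          exact mul_le_mul_of_nonneg_left hKb (by positivity)
      _ ≤ x * ((a*x/2)^ν * Real.exp (a*x) / Real.Gamma (ν+1)) * (C * Real.exp (-(b*x))) := by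
          apply mul_le_mul_of_nonneg_right _ (by positivity)
          exact mul_le_mul_of_nonneg_left hIb hx0.le
      _ = ((a/2)^ν / Real.Gamma (ν+1) * C) * (x^(ν+1) * Real.exp (-(b-a)*x)) := by
          have e1 : (a*x/2)^ν = (a/2)^ν * x^ν := by
            rw [show a*x/2 = (a/2)*x by ring, Real.mul_rpow (by positivity) hx0.le]
          have e2 : x^(ν+1) = x^ν * x := by
            rw [Real.rpow_add_one (ne_of_gt hx0)]
          have e3 : Real.exp (a*x) * Real.exp (-(b*x)) = Real.exp (-(b-a)*x) := by
            rw [← Real.exp_add]; congr 1; ring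
          rw [e1, e2, ← e3]
          ring
  · have h0 := tendsto_rpow_mul_exp_neg_mul_atTop_nhds_zero (ν+1) (b-a) (by linarith)
    have := h0.const_mul ((a/2)^ν / Real.Gamma (ν+1) * C)
    simpa using this

/-- Lemma 3.1: the improper integral `R_μ(a,b;c)` converges and has an explicit value. -/
theorem bessel_cross_integral (μ a b c : ℝ) (hμ : 0 ≤ μ) (ha : 0 < a) (hab : a < b)
    (hc : 0 < c) :
    MeasureTheory.IntegrableOn (fun x => x * besselI μ (a * x) * besselK μ (b * x))
      (Set.Ioi c) ∧
    (∫ x in Set.Ioi c, x * besselI μ (a * x) * besselK μ (b * x))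
      = (a * c * besselI (μ + 1) (a * c) * besselK μ (b * c)
          + b * c * besselI μ (a * c) * besselK (μ + 1) (b * c)) / (b ^ 2 - a ^ 2) := by
  have hb : 0 < b := lt_trans ha hab
  have hD : (0:ℝ) < b^2 - a^2 := by nlinarith
  set g : ℝ → ℝ := fun x => -(x * (a * besselI (μ+1) (a*x) * besselK μ (b*x)
    + b * besselI μ (a*x) * besselK (μ+1) (b*x)) / (b^2 - a^2)) with hgdef
  have hderivA : ∀ x : ℝ, 0 < x → HasDerivAt g (x * besselI μ (a*x) * besselK μ (b*x)) x := by
    intro x hx0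
    have hax : 0 < a*x := by positivity
    have hbx : 0 < b*x := by positivity
    have hax' : a*x ≠ 0 := ne_of_gt hax
    have hbx' : b*x ≠ 0 := ne_of_gt hbx
    have hlina : HasDerivAt (fun y : ℝ => a*y) a x := by
      simpa using (hasDerivAt_id x).const_mul a
    have hlinb : HasDerivAt (fun y : ℝ => b*y) b x := by
      simpa using (hasDerivAt_id x).const_mul b
    have hA : HasDerivAt (fun x => besselI μ (a*x))
        ((besselI (μ+1) (a*x) + μ/(a*x) * besselI μ (a*x)) * a) x :=
      (hasDerivAt_besselI_fst hμ hax).comp x hlina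
    have hA1 : HasDerivAt (fun x => besselI (μ+1) (a*x))
        ((besselI μ (a*x) - (μ+1)/(a*x) * besselI (μ+1) (a*x)) * a) x :=
      (hasDerivAt_besselI_snd hμ hax).comp x hlina
    have hB : HasDerivAt (fun x => besselK μ (b*x))
        ((μ/(b*x) * besselK μ (b*x) - besselK (μ+1) (b*x)) * b) x :=
      (hasDerivAt_besselK_fst μ hbx).comp x hlinb
    have hB1 : HasDerivAt (fun x => besselK (μ+1) (b*x))
        ((-besselK μ (b*x) - (μ+1)/(b*x) * besselK (μ+1) (b*x)) * b) x :=
      (hasDerivAt_besselK_snd μ hbx).comp x hlinb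
    have hSum := ((hA1.const_mul a).mul hB).add ((hA.const_mul b).mul hB1)
    have hFull := (((hasDerivAt_id x).mul hSum).div_const (b^2 - a^2)).neg
    refine hFull.congr_deriv ?_
    have hD' : b^2 - a^2 ≠ 0 := ne_of_gt hD
    have hx' : x ≠ 0 := ne_of_gt hx0
    simp only [id_eq, Pi.add_apply, Pi.mul_apply]
    field_simp
    ring
  have hcont : ContinuousWithinAt g (Ici c) c :=
    (hderivA c hc).continuousAt.continuousWithinAt
  have hderiv : ∀ x ∈ Ioi c, HasDerivAt g (x * besselI μ (a*x) * besselK μ (b*x)) x :=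
    fun x hx => hderivA x (lt_trans hc hx)
  have hpos : ∀ x ∈ Ioi c, 0 ≤ x * besselI μ (a*x) * besselK μ (b*x) := by
    intro x hx
    have hx0 : 0 < x := lt_trans hc hx
    have hax : 0 < a*x := by positivity
    exact mul_nonneg (mul_nonneg hx0.le (besselI_nonneg hμ hax)) (besselK_nonneg _ _)
  have htends : Tendsto g atTop (𝓝 0) := by
    have T1 := bessel_decay ha hab (ν := μ+1) (ν' := μ) (by linarith)
    have T2 := bessel_decay ha hab (ν := μ) (ν' := μ+1) hμ
    have hcomb := (((T1.const_mul a).add (T2.const_mul b)).div_const (b^2 - a^2)).neg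
    have : -((a * 0 + b * 0) / (b^2 - a^2)) = 0 := by simp
    rw [this] at hcomb
    refine hcomb.congr fun x => ?_
    rw [hgdef]
    ring
  constructor
  · exact integrableOn_Ioi_deriv_of_nonneg hcont hderiv hpos htends
  · have hval := integral_Ioi_of_hasDerivAt_of_nonneg hcont hderiv hpos htends
    rw [hval, hgdef]
    ring
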